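/- Let A ∈ ℤ^{m×n} have all entries bounded in absolute value by Δ, let b ∈ ℤ^m and c ∈ ℤ^n, and suppose there exists z ∈ ℤ^n_{≥0} with Az = b. Then the set of values {c^T x : Ax = b, x ∈ ℤ^n_{≥0}} is not bounded above if and only if there exist s ≥ 1 and column indices i_1, …, i_s ∈ {1, …, n} such that a_{i_1} + ⋯ + a_{i_s} = 0, c_{i_1} + ⋯ + c_{i_s} > 0, and every partial sum satisfies ‖a_{i_1} + ⋯ + a_{i_j}‖_∞ ≤ 2mΔ for all j ∈ {1, …, s}. -/

import Mathlib

open Finset Matrix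

lemma exists_basic {E : Type*} [AddCommGroup E] [Module ℝ E] [FiniteDimensional ℝ E]
    {ι : Type*} [DecidableEq ι] (S : Finset ι) (w : ι → E) (d : E) :
    ∀ (N : ℕ) (lam : ι → ℝ), (∀ i ∈ S, 0 ≤ lam i) → (∀ i ∈ S, lam i ≤ 1) →
      (∑ i ∈ S, lam i • w i = d) →
      (S.filter (fun i => lam i ≠ 0 ∧ lam i ≠ 1)).card ≤ N →
      ∃ mu : ι → ℝ, (∀ i ∈ S, 0 ≤ mu i) ∧ (∀ i ∈ S, mu i ≤ 1) ∧
        (∑ i ∈ S, mu i • w i = d) ∧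
        (S.filter (fun i => mu i ≠ 0 ∧ mu i ≠ 1)).card ≤ Module.finrank ℝ E := by
  classical
  intro N
  induction N with
  | zero =>
    intro lam h0 h1 hs hc
    exact ⟨lam, h0, h1, hs, le_trans hc (Nat.zero_le _)⟩
  | succ N IH =>
    intro lam h0 h1 hs hc
    by_cases hle : (S.filter (fun i => lam i ≠ 0 ∧ lam i ≠ 1)).card ≤ Module.finrank ℝ E
    · exact ⟨lam, h0, h1, hs, hle⟩
    push_neg at hle
    set F := S.filter (fun i => lam i ≠ 0 ∧ lam i ≠ 1) with hF
    have hFS : F ⊆ S := filter_subset _ _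
    -- fractional entries are strictly between 0 and 1
    have hfrac : ∀ i ∈ F, 0 < lam i ∧ lam i < 1 := by
      intro i hi
      rw [hF, mem_filter] at hi
      exact ⟨lt_of_le_of_ne (h0 i hi.1) (Ne.symm hi.2.1),
        lt_of_le_of_ne (h1 i hi.1) hi.2.2⟩
    -- linear dependence on F
    have hnli : ¬ LinearIndependent ℝ (fun i : ↥F => w i) := by
      intro hli
      have := hli.fintype_card_le_finrank
      rw [Fintype.card_coe] at this
      omega
    obtain ⟨g, hgsum, i₁, hgi₁⟩ := Fintype.not_linearIndependent_iff.1 hnli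
    set G : ι → ℝ := fun i => if h : i ∈ F then g ⟨i, h⟩ else 0 with hGdef
    have hGF : ∀ i, G i ≠ 0 → i ∈ F := by
      intro i hi
      by_contra h
      simp [hGdef, h] at hi
    have hGsum : ∑ i ∈ S, G i • w i = 0 := by
      rw [← Finset.sum_subset hFS (by intro i _ hiF; simp [hGdef, hiF])]
      rw [← Finset.sum_coe_sort F (fun i => G i • w i)]
      rw [← hgsum]
      refine Finset.sum_congr rfl ?_
      intro i _
      simp [hGdef, i.2]
    set C := F.filter (fun i => G i ≠ 0) with hC
    have hCne : C.Nonempty := by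
      refine ⟨(i₁ : ι), ?_⟩
      rw [hC, mem_filter]
      refine ⟨i₁.2, ?_⟩
      simpa [hGdef, i₁.2] using hgi₁
    set δ : ι → ℝ := fun i => if 0 < G i then (1 - lam i) / (G i) else (lam i) / (-(G i)) with hδ
    have hδi : ∀ i, δ i = if 0 < G i then (1 - lam i) / (G i) else (lam i) / (-(G i)) :=
      fun i => rfl
    have hδpos : ∀ i ∈ C, 0 < δ i := by
      intro i hi
      rw [hC, mem_filter] at hi
      obtain ⟨h01, h02⟩ := hfrac i hi.1
      rcases lt_or_gt_of_ne hi.2 with hneg | hpos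
      · rw [hδi, if_neg (not_lt.2 hneg.le)]
        exact div_pos h01 (by linarith)
      · rw [hδi, if_pos hpos]
        exact div_pos (by linarith) hpos
    set T := C.inf' hCne δ with hT
    have hTpos : 0 < T := by
      rw [hT, Finset.lt_inf'_iff]
      exact hδpos
    have hTle : ∀ i ∈ C, T ≤ δ i := fun i hi => Finset.inf'_le _ hi
    set lam' : ι → ℝ := fun i => lam i + T * G i with hlam'
    have hlam'i : ∀ i, lam' i = lam i + T * G i := fun i => rfl
    -- key bounds
    have hbounds : ∀ i ∈ S, (0 ≤ lam' i ∧ lam' i ≤ 1) := by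
      intro i hiS
      by_cases hGi : G i = 0
      · rw [hlam'i, hGi, mul_zero, add_zero]
        exact ⟨h0 i hiS, h1 i hiS⟩
      · have hiF : i ∈ F := hGF i hGi
        have hiC : i ∈ C := by rw [hC, mem_filter]; exact ⟨hiF, hGi⟩
        obtain ⟨h01, h02⟩ := hfrac i hiF
        have hTd := hTle i hiC
        rcases lt_or_gt_of_ne hGi with hneg | hpos
        · have : δ i = lam i / (-(G i)) := by rw [hδi, if_neg (not_lt.2 hneg.le)]
          rw [this] at hTd
          have h1' : T * G i ≥ (lam i / (-(G i))) * G i := by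
            apply mul_le_mul_of_nonpos_right hTd hneg.le
          have hGine : -(G i) ≠ 0 := by linarith
          have : (lam i / (-(G i))) * G i = -lam i := by
            field_simp
          rw [this] at h1'
          constructor
          · rw [hlam'i]; linarith
          · rw [hlam'i]; nlinarith
        · have : δ i = (1 - lam i) / G i := by rw [hδi, if_pos hpos]
          rw [this] at hTd
          have h1' : T * G i ≤ ((1 - lam i) / G i) * G i :=
            mul_le_mul_of_nonneg_right hTd hpos.le
          have : ((1 - lam i) / G i) * G i = 1 - lam i := by field_simp
          rw [this] at h1'
          constructor
          · rw [hlam'i]; nlinarith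
          · rw [hlam'i]; linarith
    have hsum' : ∑ i ∈ S, lam' i • w i = d := by
      have : ∀ i, lam' i • w i = lam i • w i + T • (G i • w i) := by
        intro i
        rw [hlam'i, add_smul, mul_smul]
      simp only [this]
      rw [Finset.sum_add_distrib, ← Finset.smul_sum, hGsum, smul_zero, add_zero, hs]
    -- one fractional coordinate becomes integral
    obtain ⟨i₀, hi₀C, hi₀⟩ := Finset.exists_mem_eq_inf' hCne δ
    have hi₀F : i₀ ∈ F := (mem_filter.1 hi₀C).1
    have hGi₀ : G i₀ ≠ 0 := (mem_filter.1 hi₀C).2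
    have hint : lam' i₀ = 0 ∨ lam' i₀ = 1 := by
      obtain ⟨h01, h02⟩ := hfrac i₀ hi₀F
      rcases lt_or_gt_of_ne hGi₀ with hneg | hpos
      · left
        rw [hlam'i, show T = δ i₀ from hi₀, hδi, if_neg (not_lt.2 hneg.le),
          div_mul_eq_mul_div, mul_div_assoc, div_neg, div_self hGi₀]
        ring
      · right
        rw [hlam'i, show T = δ i₀ from hi₀, hδi, if_pos hpos, div_mul_cancel₀ _ hGi₀]
        ring
    have hsubset : S.filter (fun i => lam' i ≠ 0 ∧ lam' i ≠ 1) ⊆ F.erase i₀ := by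
      intro i hi
      rw [mem_filter] at hi
      rw [mem_erase]
      constructor
      · rintro rfl
        rcases hint with h | h
        · exact hi.2.1 h
        · exact hi.2.2 h
      · by_contra hiF
        have hGi : G i = 0 := by
          by_contra h
          exact hiF (hGF i h)
        have hli : lam' i = lam i := by rw [hlam'i, hGi, mul_zero, add_zero]
        rw [hF, mem_filter] at hiF
        push_neg at hiF
        have := hiF hi.1
        rcases Classical.em (lam i = 0) with h0' | h0'
        · exact hi.2.1 (by rw [hli]; exact h0')
        · exact hi.2.2 (by rw [hli]; exact hiF hi.1 h0')
    have hcard' : (S.filter (fun i => lam' i ≠ 0 ∧ lam' i ≠ 1)).card ≤ N := by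
      have h1' := Finset.card_le_card hsubset
      have h2' := Finset.card_erase_of_mem hi₀F
      omega
    exact IH lam' (fun i hi => (hbounds i hi).1) (fun i hi => (hbounds i hi).2) hsum' hcard'


lemma list_sum_apply {α : Type*} {m : ℕ} (L : List α) (v : α → (Fin m → ℝ)) (r : Fin m) :
    (L.map v).sum r = (L.map (fun i => v i r)).sum := by
  induction L with
  | nil => simp
  | cons a t ih => simp [ih]

lemma abs_list_sum_le {α : Type*} (L : List α) (f : α → ℝ) (Δ : ℝ)
    (h : ∀ i ∈ L, |f i| ≤ Δ) : |(L.map f).sum| ≤ L.length * Δ := by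
  induction L with
  | nil => simp
  | cons a t ih =>
    simp only [List.map_cons, List.sum_cons, List.length_cons]
    calc |f a + (t.map f).sum| ≤ |f a| + |(t.map f).sum| := abs_add_le _ _
      _ ≤ Δ + t.length * Δ := by
          gcongr
          · exact h a List.mem_cons_self
          · exact ih (fun i hi => h i (List.mem_cons_of_mem _ hi))
      _ = (t.length + 1) * Δ := by ring
      _ = _ := by push_cast; ring


lemma steinitz_core {ι : Type*} [Fintype ι] [DecidableEq ι] (m : ℕ) (Δ : ℝ) (hΔ : 0 ≤ Δ)
    (v : ι → (Fin m → ℝ)) (hv : ∀ i r, |v i r| ≤ Δ) (S : Finset ι) :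
    (S.card ≤ m ∨ ∃ lam : ι → ℝ, (∀ i ∈ S, 0 ≤ lam i ∧ lam i ≤ 1) ∧
        ∑ i ∈ S, lam i = (S.card : ℝ) - m ∧ ∑ i ∈ S, lam i • v i = 0) →
      ∃ l : List ι, l.Nodup ∧ l.toFinset = S ∧
        ∀ k (r : Fin m), |(((l.take k).map v).sum) r| ≤ m * Δ := by
  classical
  induction S using Finset.strongInductionOn with
  | _ S IH =>
  intro hyp
  by_cases hcard : S.card ≤ m
  · -- any ordering works
    refine ⟨S.toList, S.nodup_toList, S.toList_toFinset, ?_⟩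
    intro k r
    rw [list_sum_apply]
    calc |((S.toList.take k).map (fun i => v i r)).sum|
        ≤ (S.toList.take k).length * Δ := by
          apply abs_list_sum_le
          intro i _
          exact hv i r
      _ ≤ m * Δ := by
          apply mul_le_mul_of_nonneg_right _ hΔ
          have h1 : (S.toList.take k).length ≤ S.toList.length := by
            simp [List.length_take]
          have h2 : S.toList.length = S.card := S.length_toList
          have : (S.toList.take k).length ≤ m := by omega
          exact_mod_cast this
  · -- main case
    push_neg at hcard
    obtain ⟨lam, hlam01, hlamsum, hlamvec⟩ := hyp.resolve_left (by omega)
    set K := S.card with hK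
    have hKR : (1 : ℝ) ≤ (K : ℝ) - m := by
      have h' : m + 1 ≤ K := hcard
      have : (m : ℝ) + 1 ≤ K := by exact_mod_cast h'
      linarith
    have hKm0 : (K : ℝ) - m ≠ 0 := by linarith
    set c₀ : ℝ := ((K : ℝ) - 1 - m) / ((K : ℝ) - m) with hc₀
    have hc₀0 : 0 ≤ c₀ := by
      apply div_nonneg <;> linarith
    have hc₀1 : c₀ ≤ 1 := by
      rw [hc₀, div_le_one (by linarith)]
      linarith
    set lam₀ : ι → ℝ := fun i => c₀ * lam i with hlam₀
    -- apply the rounding lemma in (Fin m → ℝ) × ℝ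
    have hw : ∑ i ∈ S, lam₀ i • ((v i, 1) : (Fin m → ℝ) × ℝ) = ((0 : Fin m → ℝ), (K : ℝ) - 1 - m) := by
      apply Prod.ext
      · rw [Prod.fst_sum]
        simp only [Prod.smul_mk]
        show ∑ i ∈ S, lam₀ i • v i = 0
        have : ∀ i, lam₀ i • v i = c₀ • (lam i • v i) := by
          intro i; rw [hlam₀]; simp [mul_smul]
        simp only [this, ← Finset.smul_sum, hlamvec, smul_zero]
      · rw [Prod.snd_sum]
        simp only [Prod.smul_mk]
        show ∑ i ∈ S, lam₀ i • (1 : ℝ) = (K : ℝ) - 1 - m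
        simp only [smul_eq_mul, mul_one, hlam₀]
        rw [← Finset.mul_sum, hlamsum, hc₀]
        field_simp
    have hrank : Module.finrank ℝ ((Fin m → ℝ) × ℝ) = m + 1 := by
      rw [Module.finrank_prod, Module.finrank_pi, Module.finrank_self, Fintype.card_fin]
    obtain ⟨mu, hmu0, hmu1, hmusum, hmucard⟩ :=
      exists_basic S (fun i => ((v i, 1) : (Fin m → ℝ) × ℝ)) ((0 : Fin m → ℝ), (K : ℝ) - 1 - m)
        S.card lam₀
        (fun i hi => mul_nonneg hc₀0 (hlam01 i hi).1)
        (fun i hi => le_trans (mul_le_mul hc₀1 (hlam01 i hi).2 (hlam01 i hi).1 zero_le_one) (by norm_num))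
        hw (Finset.card_filter_le _ _)
    rw [hrank] at hmucard
    have hmuvec : ∑ i ∈ S, mu i • v i = 0 := by
      have := congrArg Prod.fst hmusum
      rw [Prod.fst_sum] at this
      simpa using this
    have hmus : ∑ i ∈ S, mu i = (K : ℝ) - 1 - m := by
      have := congrArg Prod.snd hmusum
      rw [Prod.snd_sum] at this
      simpa using this
    -- find a zero coordinate
    have hzero : ∃ i₀ ∈ S, mu i₀ = 0 := by
      by_contra hno
      push_neg at hno
      set Fm := S.filter (fun i => mu i ≠ 0 ∧ mu i ≠ 1) with hFm
      have hsplit := Finset.sum_filter_add_sum_filter_not S (fun i => mu i ≠ 0 ∧ mu i ≠ 1) mu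
      have hones : ∑ i ∈ S.filter (fun i => ¬(mu i ≠ 0 ∧ mu i ≠ 1)), mu i
          = ((S.filter (fun i => ¬(mu i ≠ 0 ∧ mu i ≠ 1))).card : ℝ) := by
        rw [Finset.sum_congr rfl (g := fun _ => (1:ℝ)) ?_, Finset.sum_const, nsmul_eq_mul, mul_one]
        intro i hi
        rw [mem_filter] at hi
        push_neg at hi
        exact hi.2 (hno i hi.1)
      have hcards := Finset.card_filter_add_card_filter_not
        (s := S) (p := fun i => mu i ≠ 0 ∧ mu i ≠ 1)
      have hb : (Fm.card : ℝ) + ((S.filter (fun i => ¬(mu i ≠ 0 ∧ mu i ≠ 1))).card : ℝ) = K := by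
        exact_mod_cast hcards
      have hFmle : (Fm.card : ℝ) ≤ m + 1 := by exact_mod_cast hmucard
      rw [hones] at hsplit
      have hsum_Fm : ∑ i ∈ Fm, mu i = (Fm.card : ℝ) - 1 - m := by
        rw [← hFm] at hsplit
        linarith [hmus, hsplit]
      have hnonneg : 0 ≤ ∑ i ∈ Fm, mu i := by
        apply Finset.sum_nonneg
        intro i hi
        rw [hFm, mem_filter] at hi
        exact hmu0 i hi.1
      have hFne : Fm.Nonempty := by
        rw [← Finset.card_pos]
        have : (1:ℝ) ≤ (Fm.card : ℝ) := by linarith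
        exact_mod_cast lt_of_lt_of_le zero_lt_one (by exact_mod_cast this : (1:ℕ) ≤ Fm.card)
      have hpos : 0 < ∑ i ∈ Fm, mu i := by
        apply Finset.sum_pos _ hFne
        intro i hi
        rw [hFm, mem_filter] at hi
        exact lt_of_le_of_ne (hmu0 i hi.1) (Ne.symm hi.2.1)
      linarith
    obtain ⟨i₀, hi₀S, hmui₀⟩ := hzero
    set S' := S.erase i₀ with hS'
    have hS'card : S'.card = K - 1 := Finset.card_erase_of_mem hi₀S
    have hS'sub : S' ⊂ S := Finset.erase_ssubset hi₀S
    have hIH : ∃ l : List ι, l.Nodup ∧ l.toFinset = S' ∧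
        ∀ k (r : Fin m), |(((l.take k).map v).sum) r| ≤ m * Δ := by
      apply IH S' hS'sub
      right
      refine ⟨mu, fun i hi => ⟨hmu0 i (Finset.mem_of_mem_erase hi), hmu1 i (Finset.mem_of_mem_erase hi)⟩, ?_, ?_⟩
      · rw [Finset.sum_erase _ hmui₀, hmus, hS'card]
        have : (1:ℕ) ≤ K := by omega
        push_cast [Nat.cast_sub this]
        ring
      · rw [Finset.sum_erase _ (by rw [hmui₀, zero_smul])]
        exact hmuvec
    obtain ⟨l', hl'nd, hl'fin, hl'bnd⟩ := hIH
    have hi₀l' : i₀ ∉ l' := by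
      intro h
      rw [← List.mem_toFinset, hl'fin] at h
      exact (Finset.notMem_erase i₀ S) h
    refine ⟨l' ++ [i₀], ?_, ?_, ?_⟩
    · rw [List.nodup_append]
      exact ⟨hl'nd, List.nodup_singleton i₀, by
        intro a ha b hb
        rw [List.mem_singleton] at hb
        rintro rfl
        rw [hb] at ha
        exact hi₀l' ha⟩
    · rw [List.toFinset_append, hl'fin, List.toFinset_cons, List.toFinset_nil]
      rw [hS']
      ext x
      simp only [Finset.mem_union, Finset.mem_insert, Finset.notMem_empty, or_false,
        Finset.mem_erase, Finset.mem_insert]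
      constructor
      · rintro (⟨hx1, hx2⟩ | rfl)
        · exact hx2
        · exact hi₀S
      · intro hx
        by_cases hxi : x = i₀
        · right; exact hxi
        · left; exact ⟨hxi, hx⟩
    · intro k r
      have hl'len : l'.length = K - 1 := by
        rw [← List.toFinset_card_of_nodup hl'nd, hl'fin, hS'card]
      by_cases hk : k ≤ l'.length
      · rw [List.take_append_of_le_length hk]
        exact hl'bnd k r
      · push_neg at hk
        have hklen : (l' ++ [i₀]).length ≤ k := by
          rw [List.length_append, List.length_singleton]
          omega
        rw [List.take_of_length_le hklen]
        -- the full sum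
        have hfull : ((l' ++ [i₀]).map v).sum = ∑ i ∈ S, v i := by
          rw [← List.sum_toFinset v ?nd]
          case nd =>
            rw [List.nodup_append]
            exact ⟨hl'nd, List.nodup_singleton i₀, by
              intro a ha b hb
              rw [List.mem_singleton] at hb
              rintro rfl
              rw [hb] at ha
              exact hi₀l' ha⟩
          congr 1
          rw [List.toFinset_append, hl'fin, List.toFinset_cons, List.toFinset_nil, hS']
          ext x
          simp only [Finset.mem_union, Finset.mem_erase, Finset.mem_insert,
            Finset.notMem_empty, or_false]
          constructor
          · rintro (⟨hx1, hx2⟩ | rfl)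
            · exact hx2
            · exact hi₀S
          · intro hx
            by_cases hxi : x = i₀
            · right; exact hxi
            · left; exact ⟨hxi, hx⟩
        rw [hfull]
        rw [Finset.sum_apply]
        have hveccoord : ∑ i ∈ S, lam i * v i r = 0 := by
          have := congrFun hlamvec r
          rw [Finset.sum_apply] at this
          simpa using this
        have key : ∑ i ∈ S, v i r = ∑ i ∈ S, (1 - lam i) * v i r := by
          have hpt : ∀ i ∈ S, v i r = (1 - lam i) * v i r + lam i * v i r := by
            intro i _; ring
          rw [Finset.sum_congr rfl hpt, Finset.sum_add_distrib, hveccoord, add_zero]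
        rw [key]
        calc |∑ i ∈ S, (1 - lam i) * v i r| ≤ ∑ i ∈ S, |(1 - lam i) * v i r| :=
              Finset.abs_sum_le_sum_abs _ _
          _ ≤ ∑ i ∈ S, (1 - lam i) * Δ := by
              apply Finset.sum_le_sum
              intro i hi
              rw [abs_mul, abs_of_nonneg (by linarith [(hlam01 i hi).2])]
              exact mul_le_mul_of_nonneg_left (hv i r) (by linarith [(hlam01 i hi).2])
          _ = m * Δ := by
              rw [← Finset.sum_mul]
              congr 1
              rw [Finset.sum_sub_distrib, Finset.sum_const, hlamsum, nsmul_eq_mul, mul_one]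
              ring

lemma steinitz_list {n : ℕ} (m : ℕ) (Δ : ℝ) (hΔ : 0 ≤ Δ) (v : Fin n → Fin m → ℝ)
    (hv : ∀ i r, |v i r| ≤ Δ) (L : List (Fin n)) (hsum : (L.map v).sum = 0) :
    ∃ M : List (Fin n), M.Perm L ∧ ∀ k r, |(((M.take k).map v).sum) r| ≤ m * Δ := by
  classical
  set t := L.length with ht
  set v' : Fin t → Fin m → ℝ := fun j => v (L.get j) with hv'
  have hv'bound : ∀ j r, |v' j r| ≤ Δ := fun j r => hv _ r
  have hofn : L.map v = List.ofFn v' := by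
    conv_lhs => rw [← List.ofFn_get L]
    rw [List.map_ofFn]
    rfl
  have hsum' : ∑ j : Fin t, v' j = 0 := by
    rw [← List.sum_ofFn, ← hofn, hsum]
  have hcore := steinitz_core m Δ hΔ v' hv'bound Finset.univ ?hyp
  case hyp =>
    by_cases hTm : t ≤ m
    · left
      simpa [Finset.card_univ] using hTm
    · right
      push_neg at hTm
      have ht0 : (0:ℝ) < t := by
        have : 0 < t := by omega
        exact_mod_cast this
      have htm : (m:ℝ) < t := by exact_mod_cast hTm
      refine ⟨fun _ => ((t:ℝ) - m)/t, fun i _ => ⟨?_, ?_⟩, ?_, ?_⟩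
      · apply div_nonneg _ ht0.le
        linarith
      · rw [div_le_one ht0]
        linarith
      · rw [Finset.sum_const, Finset.card_univ, Fintype.card_fin, nsmul_eq_mul]
        field_simp
      · rw [← Finset.smul_sum (r := ((t:ℝ) - m)/t) (f := v') (s := Finset.univ)]
        rw [hsum', smul_zero]
  obtain ⟨l, hlnd, hlfin, hlbnd⟩ := hcore
  refine ⟨l.map L.get, ?_, ?_⟩
  · have hperm : l.Perm (List.finRange t) :=
      List.perm_of_nodup_nodup_toFinset_eq hlnd (List.nodup_finRange t)
        (by rw [hlfin, List.toFinset_finRange])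
    have h2 := hperm.map L.get
    rwa [List.map_get_finRange] at h2
  · intro k r
    have heq : ((l.map L.get).take k).map v = (l.take k).map v' := by
      rw [← List.map_take, List.map_map]
      rfl
    rw [heq]
    exact hlbnd k r


lemma sum_map_bind' {α β M : Type*} [AddCommMonoid M] (l : List α) (g : α → List β) (f : β → M) :
    ((l.flatMap g).map f).sum = (l.map (fun a => ((g a).map f).sum)).sum := by
  induction l with
  | nil => simp
  | cons a t ih => simp [ih]

lemma sum_map_multiset_list {n : ℕ} {M : Type*} [AddCommMonoid M] (w : Fin n → ℕ) (f : Fin n → M) :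
    ((((List.finRange n).flatMap (fun i => List.replicate (w i) i)).map f)).sum
      = ∑ i, w i • f i := by
  rw [sum_map_bind']
  have h : ∀ a : Fin n, ((List.replicate (w a) a).map f).sum = w a • f a := by
    intro a; rw [List.map_replicate, List.sum_replicate]
  simp only [h]
  rw [Fin.sum_univ_def]


/-- For a feasible integer program `max{cᵀx : Ax = b, x ∈ ℤ^n_{≥0}}`, the objective is
unbounded above iff there is a sequence of column indices `i_1, …, i_s` (`s ≥ 1`) whose
columns sum to `0`, whose `c`-weights sum to a positive number, and all of whose partial
sums have maximum norm at most `2mΔ`. -/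
theorem unbounded_iff_positive_cycle
    (m n : ℕ) (Δ : ℤ) (hΔ : 1 ≤ Δ)
    (A : Matrix (Fin m) (Fin n) ℤ)
    (hA : ∀ i j, |A i j| ≤ Δ)
    (b : Fin m → ℤ) (c : Fin n → ℤ)
    (hfeas : ∃ z : Fin n → ℤ, (∀ i, 0 ≤ z i) ∧ A.mulVec z = b) :
    (¬ BddAbove {v : ℤ | ∃ x : Fin n → ℤ,
        (∀ i, 0 ≤ x i) ∧ A.mulVec x = b ∧ v = c ⬝ᵥ x}) ↔
    (∃ s : ℕ, 1 ≤ s ∧ ∃ σ : Fin s → Fin n,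
      (∑ l : Fin s, (fun r : Fin m => A r (σ l))) = 0 ∧
      0 < ∑ l : Fin s, c (σ l) ∧
      ∀ j : ℕ, 1 ≤ j → j ≤ s →
        ‖(fun r : Fin m =>
            ((∑ l ∈ Finset.univ.filter (fun l : Fin s => (l : ℕ) < j), A r (σ l) : ℤ) : ℝ))‖
          ≤ 2 * (m : ℝ) * (Δ : ℝ)) := by
  classical
  obtain ⟨z, hz0, hzb⟩ := hfeas
  constructor
  · -- forward direction
    intro hub
    rw [not_bddAbove_iff] at hub
    have hchoice : ∀ u : ℤ, ∃ x : Fin n → ℤ, (∀ i, 0 ≤ x i) ∧ A.mulVec x = b ∧ u < c ⬝ᵥ x := by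
      intro u
      obtain ⟨w, ⟨x, hx1, hx2, rfl⟩, huw⟩ := hub u
      exact ⟨x, hx1, hx2, huw⟩
    choose φ hφ0 hφb hφv using hchoice
    set seq : ℕ → (Fin n → ℤ) := fun k => Nat.rec (φ 0) (fun _ prev => φ (c ⬝ᵥ prev)) k with hseq
    have hseqform : ∀ k, ∃ u, seq k = φ u := by
      intro k
      cases k with
      | zero => exact ⟨0, rfl⟩
      | succ k => exact ⟨c ⬝ᵥ seq k, rfl⟩
    have hseq0 : ∀ k i, 0 ≤ seq k i := by
      intro k i
      obtain ⟨u, hu⟩ := hseqform k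
      rw [hu]; exact hφ0 u i
    have hseqb : ∀ k, A.mulVec (seq k) = b := by
      intro k
      obtain ⟨u, hu⟩ := hseqform k
      rw [hu]; exact hφb u
    have hmono : StrictMono (fun k => c ⬝ᵥ seq k) := by
      apply strictMono_nat_of_lt_succ
      intro k
      exact hφv (c ⬝ᵥ seq k)
    -- Dickson's lemma
    set xN : ℕ → (Fin n → ℕ) := fun k i => (seq k i).toNat with hxN
    have hpwo : Set.IsPWO (Set.univ : Set (Fin n → ℕ)) := by simpa using Set.IsPWO.pi (s := fun _ : Fin n => (Set.univ : Set ℕ)) (fun _ => Set.isPWO_univ_iff.2 inferInstance)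
    obtain ⟨k, l, hkl, hle⟩ := hpwo.exists_lt (f := xN) (fun _ => Set.mem_univ _)
    set y : Fin n → ℤ := seq l - seq k with hy
    have hy0 : ∀ i, 0 ≤ y i := by
      intro i
      have h1 : (seq k i).toNat ≤ (seq l i).toNat := hle i
      have h2 : seq k i ≤ seq l i := by
        rw [← Int.toNat_of_nonneg (hseq0 k i), ← Int.toNat_of_nonneg (hseq0 l i)]
        exact_mod_cast h1
      simp [hy, Pi.sub_apply]
      linarith
    have hAy : A.mulVec y = 0 := by
      rw [hy, Matrix.mulVec_sub, hseqb, hseqb, sub_self]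
    have hcy : 0 < c ⬝ᵥ y := by
      rw [hy, dotProduct_sub]
      have := hmono hkl
      simp only at this
      linarith
    -- build the multiset list
    set L : List (Fin n) := (List.finRange n).flatMap (fun i => List.replicate (y i).toNat i) with hL
    have hLsum : ∀ g : Fin n → ℤ, (L.map g).sum = ∑ i, y i * g i := by
      intro g
      rw [hL, sum_map_multiset_list]
      apply Finset.sum_congr rfl
      intro i _
      rw [nsmul_eq_mul, Int.toNat_of_nonneg (hy0 i)]
    have hmulVecy : ∀ r, ∑ i, y i * A r i = 0 := by
      intro r
      have := congrFun hAy r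
      rw [Matrix.mulVec, dotProduct, Pi.zero_apply] at this
      rw [← this]
      apply Finset.sum_congr rfl
      intro i _
      ring
    -- Steinitz
    set v : Fin n → Fin m → ℝ := fun i r => (A r i : ℝ) with hv
    have hvbnd : ∀ i r, |v i r| ≤ (Δ : ℝ) := by
      intro i r
      rw [hv]
      rw [← Int.cast_abs]
      exact_mod_cast hA r i
    have hvLsum : (L.map v).sum = 0 := by
      funext r
      rw [list_sum_apply, Pi.zero_apply]
      have h1 : (L.map (fun i => v i r)) = (L.map (fun i => A r i)).map (fun x : ℤ => (x : ℝ)) := by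
        rw [List.map_map]; rfl
      rw [h1, ← Int.cast_list_sum, hLsum, hmulVecy r, Int.cast_zero]
    obtain ⟨M, hMperm, hMbnd⟩ := steinitz_list m (Δ : ℝ) (by positivity) v hvbnd L hvLsum
    set s := M.length with hs
    have hMsum : ∀ g : Fin n → ℤ, (M.map g).sum = ∑ i, y i * g i := by
      intro g
      rw [(hMperm.map g).sum_eq, hLsum]
    have hcysum : ∑ i, y i * c i = c ⬝ᵥ y := by
      rw [dotProduct]
      apply Finset.sum_congr rfl
      intro i _; ring
    have hcsum : (M.map c).sum = c ⬝ᵥ y := by rw [hMsum c, hcysum]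
    have hofn : ∀ g : Fin n → ℤ, List.ofFn (fun l : Fin s => g (M.get l)) = M.map g := by
      intro g
      conv_rhs => rw [← List.ofFn_get M, List.map_ofFn]
      rfl
    have hs1 : 1 ≤ s := by
      rcases Nat.eq_zero_or_pos s with h0 | h
      · exfalso
        have hM : M = [] := List.length_eq_zero_iff.1 h0
        rw [hM] at hcsum
        simp only [List.map_nil, List.sum_nil] at hcsum
        omega
      · exact h
    refine ⟨s, hs1, fun l => M.get l, ?_, ?_, ?_⟩
    · funext r
      rw [Finset.sum_apply, Pi.zero_apply]
      simp only
      rw [← List.sum_ofFn (f := fun l : Fin s => A r (M.get l)), hofn (fun i => A r i),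
        hMsum (fun i => A r i), hmulVecy r]
    · rw [← List.sum_ofFn (f := fun l : Fin s => c (M.get l)), hofn c, hcsum]
      exact hcy
    · intro j hj1 hjs
      have hnn : (0:ℝ) ≤ 2 * (m : ℝ) * (Δ : ℝ) := by positivity
      rw [pi_norm_le_iff_of_nonneg hnn]
      intro r
      rw [Real.norm_eq_abs]
      have e1 : ∑ l ∈ Finset.univ.filter (fun l : Fin s => (l : ℕ) < j), A r (M.get l)
          = ((M.take j).map (fun i => A r i)).sum := by
        rw [← List.sum_take_ofFn (fun l : Fin s => A r (M.get l)) j,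
          hofn (fun i => A r i), ← List.map_take]
      rw [e1]
      have e2 : ((((M.take j).map (fun i => A r i)).sum : ℤ) : ℝ)
          = ((M.take j).map v).sum r := by
        rw [list_sum_apply (M.take j) v r, Int.cast_list_sum, List.map_map]
        rfl
      rw [e2]
      have hb := hMbnd j r
      have hmd : (0:ℝ) ≤ (m:ℝ) * (Δ:ℝ) := by positivity
      calc |((M.take j).map v).sum r| ≤ (m:ℝ) * (Δ:ℝ) := hb
        _ ≤ 2 * (m : ℝ) * (Δ : ℝ) := by linarith
  · -- reverse direction
    rintro ⟨s, hs1, σ, hsum0, hcpos, _⟩ hbdd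
    set y : Fin n → ℤ := fun i => ((Finset.univ.filter (fun l : Fin s => σ l = i)).card : ℤ) with hy
    have hy0 : ∀ i, 0 ≤ y i := fun i => Int.natCast_nonneg _
    have hfiber : ∀ g : Fin n → ℤ, ∑ l : Fin s, g (σ l) = ∑ i : Fin n, y i * g i := by
      intro g
      rw [← Finset.sum_fiberwise Finset.univ σ (fun l => g (σ l))]
      apply Finset.sum_congr rfl
      intro i _
      rw [Finset.sum_congr rfl (fun l hl => by rw [(Finset.mem_filter.1 hl).2]),
        Finset.sum_const, nsmul_eq_mul]
    have hAy : A.mulVec y = 0 := by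
      funext r
      have h := congrFun hsum0 r
      rw [Finset.sum_apply] at h
      simp only [Pi.zero_apply] at h
      rw [hfiber (fun i => A r i)] at h
      rw [Matrix.mulVec, dotProduct, Pi.zero_apply]
      rw [← h]
      apply Finset.sum_congr rfl
      intro i _; ring
    have hcy : 0 < c ⬝ᵥ y := by
      rw [hfiber c] at hcpos
      rw [dotProduct]
      rw [Finset.sum_congr rfl (fun i _ => by ring : ∀ i ∈ Finset.univ, c i * y i = y i * c i)]
      exact hcpos
    obtain ⟨u, hu⟩ := hbdd
    set K : ℤ := max (u - c ⬝ᵥ z + 1) 0 with hK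
    have hK0 : 0 ≤ K := le_max_right _ _
    have hKu : u - c ⬝ᵥ z + 1 ≤ K := le_max_left _ _
    set x : Fin n → ℤ := z + K • y with hx
    have hxfeas : (∀ i, 0 ≤ x i) ∧ A.mulVec x = b ∧ (c ⬝ᵥ x) = c ⬝ᵥ x := by
      refine ⟨?_, ?_, rfl⟩
      · intro i
        have : 0 ≤ K * y i := mul_nonneg hK0 (hy0 i)
        simp [hx]
        linarith [hz0 i]
      · rw [hx, Matrix.mulVec_add, hzb, Matrix.mulVec_smul, hAy, smul_zero, add_zero]
    have hmem : (c ⬝ᵥ x) ∈ {v : ℤ | ∃ x : Fin n → ℤ,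
        (∀ i, 0 ≤ x i) ∧ A.mulVec x = b ∧ v = c ⬝ᵥ x} := ⟨x, hxfeas⟩
    have hle := hu hmem
    have hval : c ⬝ᵥ x = c ⬝ᵥ z + K * (c ⬝ᵥ y) := by
      rw [hx, dotProduct_add, dotProduct_smul, smul_eq_mul]
    have h1K : 1 ≤ c ⬝ᵥ y := hcy
    have : K * 1 ≤ K * (c ⬝ᵥ y) := mul_le_mul_of_nonneg_left h1K hK0
    rw [hval] at hle
    linarith
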